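/- Let a, b ∈ ℝ with b > 0, let θ ∈ ℂ with |θ| = 1, set λ = a − b(θ + θ⁻¹), and suppose 𝔟(k) → b as k → ∞. Let x : ℕ → ℂ be a solution of the Jacobi difference equation with coefficients (𝔞, 𝔟) and spectral parameter λ such that x(k)·θ^{−k} → 1 as k → ∞. Then 𝔟(0)·{x, x̄}(0) = b·(θ̄ − θ), where {x,y}(k) = x(k)y(k+1) − x(k+1)y(k) and x̄ is the complex conjugate sequence. -/

import Mathlib

open Complex Filter

/-- The Jacobi difference equation: for all `k ≥ 1`,
`-𝔟(k-1)·x(k-1) + 𝔞(k)·x(k) - 𝔟(k)·x(k+1) = λ·x(k)` (here written with `k+1` in place of `k`). -/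
def IsJacobiSolution (𝔞 𝔟 : ℕ → ℝ) (lam : ℂ) (x : ℕ → ℂ) : Prop :=
  ∀ k : ℕ, -(𝔟 k : ℂ) * x k + (𝔞 (k + 1) : ℂ) * x (k + 1) - (𝔟 (k + 1) : ℂ) * x (k + 2)
    = lam * x (k + 1)

/-- Discrete Wronskian `{x,y}(k) = x(k)y(k+1) − x(k+1)y(k)`. -/
def discrWronskian (x y : ℕ → ℂ) (k : ℕ) : ℂ := x k * y (k + 1) - x (k + 1) * y k

theorem jost_wronskian_boundary (a b : ℝ) (hb : 0 < b) (θ : ℂ) (hθ : ‖θ‖ = 1)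
    (𝔞 𝔟 : ℕ → ℝ) (h𝔟 : ∀ k, 0 < 𝔟 k)
    (h𝔟lim : Tendsto 𝔟 atTop (nhds b))
    (x : ℕ → ℂ) (hx : IsJacobiSolution 𝔞 𝔟 (a - b * (θ + θ⁻¹)) x)
    (hjost : Tendsto (fun k : ℕ => x k * θ⁻¹ ^ k) atTop (nhds 1)) :
    (𝔟 0 : ℂ) * discrWronskian x (fun k => (starRingEnd ℂ) (x k)) 0
      = (b : ℂ) * ((starRingEnd ℂ) θ - θ) := by
  have hθ0 : θ ≠ 0 := by
    intro h; rw [h] at hθ; simp at hθ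
  have hθ1 : θ * (starRingEnd ℂ) θ = 1 := by
    rw [Complex.mul_conj]
    norm_cast
    rw [Complex.normSq_eq_norm_sq, hθ]; norm_num
  have hinv : θ⁻¹ = (starRingEnd ℂ) θ := inv_eq_of_mul_eq_one_right hθ1
  set c := (starRingEnd ℂ) θ with hc
  have hcc : (starRingEnd ℂ) c = θ := Complex.conj_conj θ
  set W : ℕ → ℂ := discrWronskian x (fun k => (starRingEnd ℂ) (x k)) with hW
  -- conjugated Jacobi equation
  have hxc : ∀ k : ℕ, -(𝔟 k : ℂ) * (starRingEnd ℂ) (x k)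
      + (𝔞 (k + 1) : ℂ) * (starRingEnd ℂ) (x (k + 1))
      - (𝔟 (k + 1) : ℂ) * (starRingEnd ℂ) (x (k + 2))
      = ((a : ℂ) - b * (θ + θ⁻¹)) * (starRingEnd ℂ) (x (k + 1)) := by
    intro k
    have := congrArg (starRingEnd ℂ) (hx k)
    simpa [map_sub, map_add, map_mul, map_neg, hinv, hθ1, ← hc, hcc, mul_comm,
      mul_left_comm, add_comm] using this
  -- the Wronskian multiplied by 𝔟 is constant
  have hstep : ∀ k : ℕ, (𝔟 (k + 1) : ℂ) * W (k + 1) = (𝔟 k : ℂ) * W k := by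
    intro k
    have h1 := hx k
    have h2 := hxc k
    simp only [hW, discrWronskian]
    linear_combination (starRingEnd ℂ) (x (k + 1)) * h1 - x (k + 1) * h2
  have hconst : ∀ k : ℕ, (𝔟 k : ℂ) * W k = (𝔟 0 : ℂ) * W 0 := by
    intro k
    induction k with
    | zero => rfl
    | succ n ih => rw [hstep n, ih]
  -- compute the limit of 𝔟 k * W k
  set u : ℕ → ℂ := fun k => x k * θ⁻¹ ^ k with hu
  have hxu : ∀ k, x k = u k * θ ^ k := by
    intro k
    simp only [hu]
    rw [mul_assoc, ← mul_pow, inv_mul_cancel₀ hθ0, one_pow, mul_one]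
  have hWform : ∀ k, W k = u k * (starRingEnd ℂ) (u (k + 1)) * c
      - u (k + 1) * (starRingEnd ℂ) (u k) * θ := by
    intro k
    have hpk : θ ^ k * c ^ k = 1 := by rw [← mul_pow, hθ1, one_pow]
    simp only [hW, discrWronskian, hxu, map_mul, map_pow, ← hc]
    rw [pow_succ, pow_succ]
    linear_combination (u k * (starRingEnd ℂ) (u (k + 1)) * c
      - u (k + 1) * (starRingEnd ℂ) (u k) * θ) * hpk
  -- limits
  have hb' : Tendsto (fun k : ℕ => ((𝔟 k : ℝ) : ℂ)) atTop (nhds (b : ℂ)) :=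
    (Complex.continuous_ofReal.tendsto b).comp h𝔟lim
  have hu1 : Tendsto u atTop (nhds 1) := hjost
  have hu2 : Tendsto (fun k => u (k + 1)) atTop (nhds 1) :=
    hu1.comp (tendsto_add_atTop_nat 1)
  have hcu1 : Tendsto (fun k => (starRingEnd ℂ) (u k)) atTop (nhds 1) := by
    have := (Complex.continuous_conj.tendsto 1).comp hu1
    simpa [Function.comp_def] using this
  have hcu2 : Tendsto (fun k => (starRingEnd ℂ) (u (k + 1))) atTop (nhds 1) := by
    have := (Complex.continuous_conj.tendsto 1).comp hu2
    simpa [Function.comp_def] using this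
  have hWlim : Tendsto W atTop (nhds (c - θ)) := by
    have : Tendsto (fun k => u k * (starRingEnd ℂ) (u (k + 1)) * c
        - u (k + 1) * (starRingEnd ℂ) (u k) * θ) atTop (nhds (1 * 1 * c - 1 * 1 * θ)) :=
      (((hu1.mul hcu2).mul tendsto_const_nhds).sub ((hu2.mul hcu1).mul tendsto_const_nhds))
    simpa [hWform] using this.congr (fun k => (hWform k).symm)
  have hFlim : Tendsto (fun k => (𝔟 k : ℂ) * W k) atTop (nhds ((b : ℂ) * (c - θ))) :=
    hb'.mul hWlim
  have hFconst : Tendsto (fun k => (𝔟 k : ℂ) * W k) atTop (nhds ((𝔟 0 : ℂ) * W 0)) := by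
    simpa [hconst] using (tendsto_const_nhds :
      Tendsto (fun _ : ℕ => (𝔟 0 : ℂ) * W 0) atTop (nhds ((𝔟 0 : ℂ) * W 0)))
  have := tendsto_nhds_unique hFconst hFlim
  simpa [mul_sub] using this
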